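/- Let C₀ = (≤1 r.⊤) (i.e., ¬(≥2 r.⊤)) and Σ = {r, s, s'}. Then for every ALC(Σ) concept C, ⊨ C₀ ⊑ (∃r.C → ∀r.C); and any (Σ,n)-uniform ALC interpolant of C₀ (with empty ontology) has size at least Tower(n−2) for n ≥ 2. -/

import Mathlib

namespace DL

/-- ALCQ concepts over concept names `Cn` and role names `Rn`. -/
inductive Concept (Cn Rn : Type) : Type
  | top : Concept Cn Rn
  | atom : Cn → Concept Cn Rn
  | neg : Concept Cn Rn → Concept Cn Rn
  | conj : Concept Cn Rn → Concept Cn Rn → Concept Cn Rn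
  | atLeast : ℕ → Rn → Concept Cn Rn → Concept Cn Rn
  deriving DecidableEq

namespace Concept
variable {Cn Rn : Type}

/-- ∃r.C -/
def ex (r : Rn) (c : Concept Cn Rn) : Concept Cn Rn := atLeast 1 r c
/-- ∀r.C -/
def all (r : Rn) (c : Concept Cn Rn) : Concept Cn Rn := neg (atLeast 1 r (neg c))
def disj (c d : Concept Cn Rn) : Concept Cn Rn := neg (conj (neg c) (neg d))
def impl (c d : Concept Cn Rn) : Concept Cn Rn := disj (neg c) d
def bot : Concept Cn Rn := neg top

/-- an ALC concept: all number restrictions are existential restrictions. -/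
def isALC : Concept Cn Rn → Prop
  | top => True
  | atom _ => True
  | neg c => c.isALC
  | conj c d => c.isALC ∧ d.isALC
  | atLeast n _ c => n = 1 ∧ c.isALC

/-- size (number of symbols) of a concept. -/
def size : Concept Cn Rn → ℕ
  | top => 1
  | atom _ => 1
  | neg c => c.size + 1
  | conj c d => c.size + d.size + 1
  | atLeast n _ c => c.size + n + 2

/-- role depth of a concept. -/
def roleDepth : Concept Cn Rn → ℕ
  | top => 0
  | atom _ => 0
  | neg c => c.roleDepth
  | conj c d => max c.roleDepth d.roleDepth
  | atLeast _ _ c => c.roleDepth + 1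

end Concept

/-- big conjunction of a list of concepts -/
def bigConj {Cn Rn : Type} : List (Concept Cn Rn) → Concept Cn Rn
  | [] => Concept.top
  | c :: l => Concept.conj c (bigConj l)

/-- big disjunction of a list of concepts -/
def bigDisj {Cn Rn : Type} (l : List (Concept Cn Rn)) : Concept Cn Rn :=
  Concept.neg (bigConj (l.map Concept.neg))

/-- a signature: a set of concept names and a set of role names. -/
structure Sig (Cn Rn : Type) where
  cs : Set Cn
  rs : Set Rn

/-- the concept uses only symbols from the signature σ. -/
def Concept.inSig {Cn Rn : Type} (σ : Sig Cn Rn) : Concept Cn Rn → Prop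
  | .top => True
  | .atom A => A ∈ σ.cs
  | .neg c => c.inSig σ
  | .conj c d => c.inSig σ ∧ d.inSig σ
  | .atLeast _ r c => r ∈ σ.rs ∧ c.inSig σ

/-- an interpretation I = (Δ^I, ·^I). -/
structure Interp (Cn Rn : Type) : Type 1 where
  Dom : Type
  atomI : Cn → Set Dom
  roleI : Rn → Set (Dom × Dom)

/-- extension C^I of a concept in an interpretation. -/
def Concept.sem {Cn Rn : Type} (I : Interp Cn Rn) : Concept Cn Rn → Set I.Dom
  | .top => Set.univ
  | .atom A => I.atomI A
  | .neg c => (c.sem I)ᶜ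
  | .conj c d => c.sem I ∩ d.sem I
  | .atLeast n r c =>
      {x | ∃ s : Finset I.Dom, n ≤ s.card ∧ ∀ e ∈ s, (x, e) ∈ I.roleI r ∧ e ∈ c.sem I}

/-- an ontology: concept inclusions and role inclusions. -/
structure Ontology (Cn Rn : Type) where
  cis : Set (Concept Cn Rn × Concept Cn Rn)
  ris : Set (Rn × Rn)

def Interp.isModel {Cn Rn : Type} (I : Interp Cn Rn) (O : Ontology Cn Rn) : Prop :=
  (∀ p ∈ O.cis, Concept.sem I p.1 ⊆ Concept.sem I p.2) ∧
  (∀ p ∈ O.ris, I.roleI p.1 ⊆ I.roleI p.2)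

/-- O ⊨ c ⊑ d -/
def entails {Cn Rn : Type} (O : Ontology Cn Rn) (c d : Concept Cn Rn) : Prop :=
  ∀ I : Interp Cn Rn, I.isModel O → c.sem I ⊆ d.sem I

/-- O ⊨ r ⊑ s for role names -/
def roleEnt {Cn Rn : Type} (O : Ontology Cn Rn) (r s : Rn) : Prop :=
  ∀ I : Interp Cn Rn, I.isModel O → I.roleI r ⊆ I.roleI s

/-- Z is a Σ-bisimulation between I and J. -/
def IsBisim {Cn Rn : Type} (σ : Sig Cn Rn) (I J : Interp Cn Rn)
    (Z : Set (I.Dom × J.Dom)) : Prop :=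
  ∀ d e, (d, e) ∈ Z →
    (∀ A ∈ σ.cs, d ∈ I.atomI A ↔ e ∈ J.atomI A) ∧
    (∀ r ∈ σ.rs, ∀ d', (d, d') ∈ I.roleI r → ∃ e', (e, e') ∈ J.roleI r ∧ (d', e') ∈ Z) ∧
    (∀ r ∈ σ.rs, ∀ e', (e, e') ∈ J.roleI r → ∃ d', (d, d') ∈ I.roleI r ∧ (d', e') ∈ Z)

/-- pointed interpretations are Σ-bisimilar. -/
def Bisimilar {Cn Rn : Type} (σ : Sig Cn Rn) (I : Interp Cn Rn) (d : I.Dom)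
    (J : Interp Cn Rn) (e : J.Dom) : Prop :=
  ∃ Z, IsBisim σ I J Z ∧ (d, e) ∈ Z

/-- E is an ALC(Σ) interpolant for O ⊨ c ⊑ d. -/
def IsInterpolant {Cn Rn : Type} (O : Ontology Cn Rn) (σ : Sig Cn Rn)
    (c d E : Concept Cn Rn) : Prop :=
  E.isALC ∧ E.inSig σ ∧ entails O c E ∧ entails O E d

/-- c and d are jointly ∼_{ALC,Σ}-consistent under O. -/
def JointlyConsistent {Cn Rn : Type} (O : Ontology Cn Rn) (σ : Sig Cn Rn)
    (c d : Concept Cn Rn) : Prop :=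
  ∃ (I₁ I₂ : Interp Cn Rn) (d₁ : I₁.Dom) (d₂ : I₂.Dom),
    I₁.isModel O ∧ I₂.isModel O ∧ d₁ ∈ c.sem I₁ ∧ d₂ ∈ d.sem I₂ ∧ Bisimilar σ I₁ d₁ I₂ d₂

/-- semantics of a set of concepts viewed as conjunction. -/
def setSem {Cn Rn : Type} (I : Interp Cn Rn) (t : Set (Concept Cn Rn)) : Set I.Dom :=
  {x | ∀ c ∈ t, x ∈ c.sem I}

/-- the type of an element: concepts from sub true at x. -/
def tpSet {Cn Rn : Type} (I : Interp Cn Rn) (sub : Set (Concept Cn Rn)) (x : I.Dom) :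
    Set (Concept Cn Rn) :=
  {c | c ∈ sub ∧ x ∈ c.sem I}

/-- t is a type for O (realizable subset of sub). -/
def IsTypeFor {Cn Rn : Type} (O : Ontology Cn Rn) (sub : Set (Concept Cn Rn))
    (t : Set (Concept Cn Rn)) : Prop :=
  ∃ (I : Interp Cn Rn) (x : I.Dom), I.isModel O ∧ t = tpSet I sub x

/-- t_{/r} = {C : ∀r.C ∈ t} -/
def slash {Cn Rn : Type} (t : Set (Concept Cn Rn)) (r : Rn) : Set (Concept Cn Rn) :=
  {c | Concept.all r c ∈ t}

/-- t ⤳_r t' -/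
def typeStep {Cn Rn : Type} (r : Rn) (t t' : Set (Concept Cn Rn)) : Prop :=
  slash t r ⊆ t'

/-- T ⤳_s T' for mosaics -/
def mosaicStep {Cn Rn : Type} (s : Rn) (T T' : Set (Set (Concept Cn Rn))) : Prop :=
  ∀ t ∈ T, ∃ t' ∈ T', typeStep s t t'

/-- O ⊨ t ⊑ D for a type t viewed as conjunction. -/
def entailsSet {Cn Rn : Type} (O : Ontology Cn Rn) (t : Set (Concept Cn Rn))
    (D : Concept Cn Rn) : Prop :=
  ∀ I : Interp Cn Rn, I.isModel O → setSem I t ⊆ D.sem I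

/-- iterated exponential -/
def Tower : ℕ → ℕ
  | 0 => 1
  | n + 1 => 2 ^ Tower n

/-- U is a (Σ,n)-uniform interpolant of c₀ under O. -/
def UniformInterpolant {Cn Rn : Type} (O : Ontology Cn Rn) (σ : Sig Cn Rn)
    (c₀ : Concept Cn Rn) (n : ℕ) (U : Concept Cn Rn) : Prop :=
  U.isALC ∧ U.inSig σ ∧ entails O c₀ U ∧
  ∀ E : Concept Cn Rn, E.isALC → E.inSig σ → E.roleDepth ≤ n →
    entails O c₀ E → entails O U E

/-- the empty ontology. -/
def Oempty : Ontology ℕ (Fin 3) := ⟨∅, ∅⟩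

/-- the signature Σ = {r, s, s'} with r = 0, s = 1, s' = 2. -/
def σ13 : Sig ℕ (Fin 3) := ⟨∅, {0, 1, 2}⟩

/-- C₀ = (≤ 1 r.⊤), i.e. ¬(≥ 2 r.⊤). -/
def C13 : Concept ℕ (Fin 3) := Concept.neg (Concept.atLeast 2 0 Concept.top)

/-! ### Auxiliary development for Theorem 4 -/

section Aux

variable {Cn Rn : Type}

lemma isModel_Oempty (I : Interp ℕ (Fin 3)) : I.isModel Oempty :=
  ⟨fun _ hp => hp.elim, fun _ hp => hp.elim⟩

lemma mem_rs13 (ρ : Fin 3) : ρ ∈ σ13.rs := by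
  fin_cases ρ <;> simp [σ13]

/-! #### semantics lemmas -/

lemma sem_atLeast1 {I : Interp Cn Rn} {r : Rn} {c : Concept Cn Rn} {x : I.Dom} :
    x ∈ (Concept.atLeast 1 r c).sem I ↔ ∃ y, (x, y) ∈ I.roleI r ∧ y ∈ c.sem I := by
  constructor
  · rintro ⟨s, hs, h⟩
    have hpos : 0 < s.card := by omega
    obtain ⟨y, hy⟩ := Finset.card_pos.mp hpos
    exact ⟨y, h y hy⟩
  · rintro ⟨y, h1, h2⟩
    exact ⟨{y}, by simp, by simp [h1, h2]⟩

lemma sem_ex {I : Interp Cn Rn} {r : Rn} {c : Concept Cn Rn} {x : I.Dom} :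
    x ∈ (Concept.ex r c).sem I ↔ ∃ y, (x, y) ∈ I.roleI r ∧ y ∈ c.sem I :=
  sem_atLeast1

lemma sem_neg {I : Interp Cn Rn} {c : Concept Cn Rn} {x : I.Dom} :
    x ∈ (Concept.neg c).sem I ↔ x ∉ c.sem I := Iff.rfl

lemma sem_conj {I : Interp Cn Rn} {c d : Concept Cn Rn} {x : I.Dom} :
    x ∈ (Concept.conj c d).sem I ↔ x ∈ c.sem I ∧ x ∈ d.sem I := Iff.rfl

lemma sem_all {I : Interp Cn Rn} {r : Rn} {c : Concept Cn Rn} {x : I.Dom} :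
    x ∈ (Concept.all r c).sem I ↔ ∀ y, (x, y) ∈ I.roleI r → y ∈ c.sem I := by
  rw [Concept.all, sem_neg, sem_atLeast1]
  push_neg
  constructor
  · intro h y hy
    by_contra hc
    exact (h y hy) hc
  · intro h y hy
    exact fun hm => hm (h y hy)

lemma sem_impl {I : Interp Cn Rn} {c d : Concept Cn Rn} {x : I.Dom} :
    x ∈ (Concept.impl c d).sem I ↔ (x ∈ c.sem I → x ∈ d.sem I) := by
  show ¬(¬¬(x ∈ c.sem I) ∧ ¬(x ∈ d.sem I)) ↔ (x ∈ c.sem I → x ∈ d.sem I)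
  tauto

lemma sem_bigConj {I : Interp Cn Rn} {l : List (Concept Cn Rn)} {x : I.Dom} :
    x ∈ (bigConj l).sem I ↔ ∀ c ∈ l, x ∈ c.sem I := by
  induction l with
  | nil => simp [bigConj, Concept.sem]
  | cons c l ih => simp [bigConj, sem_conj, ih]

lemma sem_bigDisj {I : Interp Cn Rn} {l : List (Concept Cn Rn)} {x : I.Dom} :
    x ∈ (bigDisj l).sem I ↔ ∃ c ∈ l, x ∈ c.sem I := by
  rw [bigDisj, sem_neg, sem_bigConj]
  push_neg
  simp only [List.mem_map]
  constructor
  · rintro ⟨d, ⟨c, hc, rfl⟩, hd⟩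
    rw [sem_neg, not_not] at hd
    exact ⟨c, hc, hd⟩
  · rintro ⟨c, hc, hx⟩
    exact ⟨Concept.neg c, ⟨c, hc, rfl⟩, by rw [sem_neg, not_not]; exact hx⟩

/-! #### structural lemmas for big conjunctions/disjunctions -/

lemma isALC_bigConj {l : List (Concept Cn Rn)} (h : ∀ c ∈ l, c.isALC) :
    (bigConj l).isALC := by
  induction l with
  | nil => trivial
  | cons c l ih =>
      exact ⟨h c (by simp), ih fun d hd => h d (by simp [hd])⟩

lemma isALC_bigDisj {l : List (Concept Cn Rn)} (h : ∀ c ∈ l, c.isALC) :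
    (bigDisj l).isALC := by
  rw [bigDisj]
  show (bigConj (l.map Concept.neg)).isALC
  apply isALC_bigConj
  rintro d hd
  obtain ⟨c, hc, rfl⟩ := List.mem_map.mp hd
  exact h c hc

lemma inSig_bigConj {σ : Sig Cn Rn} {l : List (Concept Cn Rn)}
    (h : ∀ c ∈ l, c.inSig σ) : (bigConj l).inSig σ := by
  induction l with
  | nil => trivial
  | cons c l ih =>
      exact ⟨h c (by simp), ih fun d hd => h d (by simp [hd])⟩

lemma inSig_bigDisj {σ : Sig Cn Rn} {l : List (Concept Cn Rn)}
    (h : ∀ c ∈ l, c.inSig σ) : (bigDisj l).inSig σ := by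
  rw [bigDisj]
  show (bigConj (l.map Concept.neg)).inSig σ
  apply inSig_bigConj
  rintro d hd
  obtain ⟨c, hc, rfl⟩ := List.mem_map.mp hd
  exact h c hc

lemma roleDepth_bigConj {l : List (Concept Cn Rn)} {k : ℕ}
    (h : ∀ c ∈ l, c.roleDepth ≤ k) : (bigConj l).roleDepth ≤ k := by
  induction l with
  | nil => simp [bigConj, Concept.roleDepth]
  | cons c l ih =>
      have : (bigConj (c :: l)).roleDepth = max c.roleDepth (bigConj l).roleDepth := rfl
      rw [this]
      exact max_le (h c (by simp)) (ih fun d hd => h d (by simp [hd]))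

lemma roleDepth_bigDisj {l : List (Concept Cn Rn)} {k : ℕ}
    (h : ∀ c ∈ l, c.roleDepth ≤ k) : (bigDisj l).roleDepth ≤ k := by
  rw [bigDisj]
  show (bigConj (l.map Concept.neg)).roleDepth ≤ k
  apply roleDepth_bigConj
  rintro d hd
  obtain ⟨c, hc, rfl⟩ := List.mem_map.mp hd
  exact h c hc

/-! #### top-level modal subformulas -/

variable [DecidableEq Cn] [DecidableEq Rn]

/-- the maximal subformulas of the form `atLeast n r c`. -/
def topModal : Concept Cn Rn → Finset (Concept Cn Rn)
  | .top => ∅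
  | .atom _ => ∅
  | .neg c => topModal c
  | .conj c d => topModal c ∪ topModal d
  | .atLeast n r c => {Concept.atLeast n r c}

lemma card_topModal (c : Concept Cn Rn) : (topModal c).card ≤ c.size := by
  induction c with
  | top => simp [topModal, Concept.size]
  | atom A => simp [topModal, Concept.size]
  | neg c ih => simp only [topModal, Concept.size]; omega
  | conj c d ihc ihd =>
      simp only [topModal, Concept.size]
      calc (topModal c ∪ topModal d).card ≤ (topModal c).card + (topModal d).card :=
            Finset.card_union_le _ _
        _ ≤ c.size + d.size + 1 := by omega
  | atLeast n r c ih => simp only [topModal, Concept.size, Finset.card_singleton]; omega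

lemma mem_topModal_alc {c M : Concept Cn Rn} (hc : c.isALC) (hM : M ∈ topModal c) :
    ∃ (r : Rn) (d : Concept Cn Rn), M = Concept.atLeast 1 r d := by
  induction c with
  | top => simp [topModal] at hM
  | atom A => simp [topModal] at hM
  | neg c ih => exact ih hc hM
  | conj c d ihc ihd =>
      rcases Finset.mem_union.mp hM with h | h
      · exact ihc hc.1 h
      · exact ihd hc.2 h
  | atLeast n r c ih =>
      obtain rfl : M = Concept.atLeast n r c := Finset.mem_singleton.mp hM
      exact ⟨r, c, by rw [hc.1]⟩

/-- atom-free concepts only depend on their top-level modal subformulas. -/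
lemma sem_congr_topModal {I : Interp ℕ (Fin 3)} {x y : I.Dom} :
    ∀ {c : Concept ℕ (Fin 3)}, c.inSig σ13 →
      (∀ M ∈ topModal c, (x ∈ M.sem I ↔ y ∈ M.sem I)) →
      (x ∈ c.sem I ↔ y ∈ c.sem I)
  | Concept.top, _, _ => by simp [Concept.sem]
  | Concept.atom A, hσ, _ => by
      exfalso
      have : A ∈ σ13.cs := hσ
      simp [σ13] at this
  | Concept.neg c, hσ, h => by
      rw [sem_neg, sem_neg]
      exact not_congr (sem_congr_topModal hσ h)
  | Concept.conj c d, hσ, h => by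
      rw [sem_conj, sem_conj]
      exact and_congr
        (sem_congr_topModal hσ.1 fun M hM => h M (Finset.mem_union_left _ hM))
        (sem_congr_topModal hσ.2 fun M hM => h M (Finset.mem_union_right _ hM))
  | Concept.atLeast n r c, _, h => h _ (Finset.mem_singleton_self _)

end Aux

/-! #### the tower of types -/

/-- iterated powerset types: `Ty j` has exactly `Tower j` elements. -/
def Ty : ℕ → Type
  | 0 => Unit
  | j + 1 => Finset (Ty j)

instance instDecEqTy : ∀ j, DecidableEq (Ty j)
  | 0 => inferInstanceAs (DecidableEq Unit)
  | j + 1 =>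
      have := instDecEqTy j
      inferInstanceAs (DecidableEq (Finset (Ty j)))

instance instFintypeTy : ∀ j, Fintype (Ty j)
  | 0 => inferInstanceAs (Fintype Unit)
  | j + 1 =>
      have := instFintypeTy j
      inferInstanceAs (Fintype (Finset (Ty j)))

lemma card_Ty : ∀ j, Fintype.card (Ty j) = Tower j
  | 0 => by
      have h : Fintype.card (Ty 0) = Fintype.card Unit := Fintype.card_congr (Equiv.cast rfl)
      rw [h, Fintype.card_unit]; rfl
  | j + 1 => by
      have h : Fintype.card (Ty (j + 1)) = Fintype.card (Finset (Ty j)) :=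
        Fintype.card_congr (Equiv.cast rfl)
      rw [h, Fintype.card_finset, card_Ty j]; rfl

/-- the characteristic concept of a type, over the role `s = 1` only. -/
noncomputable def chi : (j : ℕ) → Ty j → Concept ℕ (Fin 3)
  | 0, _ => Concept.top
  | j + 1, t =>
      Concept.conj
        (bigConj ((Finset.toList (α := Ty j) t).map fun u => Concept.ex 1 (chi j u)))
        (Concept.all 1 (bigDisj ((Finset.toList (α := Ty j) t).map (chi j))))

lemma chi_isALC : ∀ j (t : Ty j), (chi j t).isALC
  | 0, _ => trivial
  | j + 1, t => by
      constructor
      · apply isALC_bigConj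
        rintro d hd
        obtain ⟨u, _, rfl⟩ := List.mem_map.mp hd
        exact ⟨rfl, chi_isALC j u⟩
      · show (Concept.atLeast 1 1 _).isALC
        refine ⟨rfl, ?_⟩
        show (bigDisj _).isALC
        apply isALC_bigDisj
        rintro d hd
        obtain ⟨u, _, rfl⟩ := List.mem_map.mp hd
        exact chi_isALC j u

lemma chi_inSig : ∀ j (t : Ty j), (chi j t).inSig σ13
  | 0, _ => trivial
  | j + 1, t => by
      constructor
      · apply inSig_bigConj
        rintro d hd
        obtain ⟨u, _, rfl⟩ := List.mem_map.mp hd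
        exact ⟨mem_rs13 1, chi_inSig j u⟩
      · show ((Concept.atLeast 1 1 _ : Concept ℕ (Fin 3))).inSig σ13
        refine ⟨mem_rs13 1, ?_⟩
        show (bigDisj _).inSig σ13
        apply inSig_bigDisj
        rintro d hd
        obtain ⟨u, _, rfl⟩ := List.mem_map.mp hd
        exact chi_inSig j u

lemma chi_roleDepth : ∀ j (t : Ty j), (chi j t).roleDepth ≤ j
  | 0, _ => le_refl 0
  | j + 1, t => by
      have h1 : (bigConj ((Finset.toList (α := Ty j) t).map
          fun u => Concept.ex 1 (chi j u))).roleDepth ≤ j + 1 := by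
        apply roleDepth_bigConj
        rintro d hd
        obtain ⟨u, _, rfl⟩ := List.mem_map.mp hd
        show (chi j u).roleDepth + 1 ≤ j + 1
        exact Nat.succ_le_succ (chi_roleDepth j u)
      have h2 : (bigDisj ((Finset.toList (α := Ty j) t).map (chi j))).roleDepth ≤ j := by
        apply roleDepth_bigDisj
        rintro d hd
        obtain ⟨u, _, rfl⟩ := List.mem_map.mp hd
        exact chi_roleDepth j u
      show max _ ((Concept.all 1 _).roleDepth) ≤ j + 1
      apply max_le h1
      show (bigDisj _).roleDepth + 1 ≤ j + 1
      exact Nat.succ_le_succ h2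

/-- the interpretation containing all the type trees plus roots indexed by
finite sets of level-`m` types. -/
def Jm (m : ℕ) : Interp ℕ (Fin 3) where
  Dom := (Σ j, Ty j) ⊕ Finset (Ty m)
  atomI := fun _ => ∅
  roleI := fun ρ =>
    if ρ = 0 then
      {p | ∃ (S : Finset (Ty m)) (t : Ty m),
        t ∈ S ∧ p = (Sum.inr S, Sum.inl ⟨m, t⟩)}
    else if ρ = 1 then
      {p | ∃ (j : ℕ) (t : Finset (Ty j)) (u : Ty j),
        u ∈ t ∧ p = (Sum.inl ⟨j + 1, (t : Ty (j + 1))⟩, Sum.inl ⟨j, u⟩)}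
    else ∅

lemma roleI_0 (m : ℕ) : (Jm m).roleI 0 =
    {p | ∃ (S : Finset (Ty m)) (t : Ty m),
      t ∈ S ∧ p = (Sum.inr S, Sum.inl ⟨m, t⟩)} := rfl

lemma roleI_1 (m : ℕ) : (Jm m).roleI 1 =
    {p | ∃ (j : ℕ) (t : Finset (Ty j)) (u : Ty j),
      u ∈ t ∧ p = (Sum.inl ⟨j + 1, (t : Ty (j + 1))⟩, Sum.inl ⟨j, u⟩)} := rfl

lemma roleI_2 (m : ℕ) : (Jm m).roleI 2 = ∅ := rfl

lemma succ_r {m : ℕ} {S : Finset (Ty m)} {y : (Jm m).Dom} :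
    ((Sum.inr S, y) ∈ (Jm m).roleI 0) ↔ ∃ t ∈ S, y = Sum.inl ⟨m, t⟩ := by
  rw [roleI_0]
  constructor
  · rintro ⟨S', t, ht, h⟩
    replace h := Prod.mk.inj h
    obtain ⟨h1, h2⟩ := h
    obtain rfl : S = S' := Sum.inr.inj h1
    exact ⟨t, ht, h2⟩
  · rintro ⟨t, ht, rfl⟩
    exact ⟨S, t, ht, rfl⟩

lemma no_succ_s_root {m : ℕ} {S : Finset (Ty m)} {y : (Jm m).Dom} {ρ : Fin 3}
    (hρ : ρ ≠ 0) : (Sum.inr S, y) ∉ (Jm m).roleI ρ := by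
  intro h
  by_cases h1 : ρ = 1
  · subst h1
    rw [roleI_1] at h
    obtain ⟨j, t, u, _, h⟩ := h
    replace h := Prod.mk.inj h
    exact absurd h.1 (by simp)
  · have h2 : ρ = 2 := by omega
    subst h2
    rw [roleI_2] at h
    exact h

lemma succ_s {m j : ℕ} {t : Finset (Ty j)} {y : (Jm m).Dom} :
    ((Sum.inl ⟨j + 1, (t : Ty (j + 1))⟩, y) ∈ (Jm m).roleI 1) ↔
      ∃ u ∈ t, y = Sum.inl ⟨j, u⟩ := by
  rw [roleI_1]
  constructor
  · rintro ⟨j', t', u', hu', h⟩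
    replace h := Prod.mk.inj h
    obtain ⟨h1, h2⟩ := h
    have h1' := Sum.inl.inj h1
    injection h1' with h3 h4
    obtain rfl : j = j' := Nat.succ.inj h3
    obtain rfl : t = t' := eq_of_heq h4
    exact ⟨u', hu', h2⟩
  · rintro ⟨u, hu, rfl⟩
    exact ⟨j, t, u, hu, rfl⟩

lemma chi_sem {m : ℕ} : ∀ (j : ℕ) (t u : Ty j),
    ((Sum.inl ⟨j, u⟩ : (Jm m).Dom) ∈ (chi j t).sem (Jm m)) ↔ u = t
  | 0, t, u => by
      simp only [chi, Concept.sem, Set.mem_univ, true_iff]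
      exact iff_of_true (Set.mem_univ _) (Subsingleton.elim (α := Unit) u t)
  | j + 1, t, u => by
      rw [chi]
      constructor
      · intro h
        obtain ⟨h1, h2⟩ := (sem_conj).mp h
        replace h1 := sem_bigConj.mp h1
        replace h2 := sem_all.mp h2
        apply Finset.Subset.antisymm
        · -- u ⊆ t
          intro d hd
          have hsucc : ((Sum.inl ⟨j + 1, (u : Ty (j+1))⟩ : (Jm m).Dom),
              (Sum.inl ⟨j, d⟩ : (Jm m).Dom)) ∈ (Jm m).roleI 1 :=
            succ_s.mpr ⟨d, hd, rfl⟩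
          have := h2 _ hsucc
          replace this := sem_bigDisj.mp this
          obtain ⟨e, he, hde⟩ := this
          obtain ⟨c, hc, rfl⟩ := List.mem_map.mp he
          have : d = c := (chi_sem j c d).mp hde
          subst this
          exact Finset.mem_toList.mp hc
        · -- t ⊆ u
          intro c hc
          have hmem : Concept.ex 1 (chi j c) ∈
              (Finset.toList (α := Ty j) t).map fun u => Concept.ex 1 (chi j u) :=
            List.mem_map.mpr ⟨c, Finset.mem_toList.mpr hc, rfl⟩
          have := h1 _ hmem
          replace this := sem_ex.mp this
          obtain ⟨y, hy, hyc⟩ := this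
          obtain ⟨d, hd, rfl⟩ := succ_s.mp hy
          have : d = c := (chi_sem j c d).mp hyc
          subst this
          exact hd
      · rintro rfl
        refine sem_conj.mpr ?_
        constructor
        · refine sem_bigConj.mpr ?_
          rintro e he
          obtain ⟨c, hc, rfl⟩ := List.mem_map.mp he
          refine sem_ex.mpr ?_
          refine ⟨Sum.inl ⟨j, c⟩, succ_s.mpr ⟨c, Finset.mem_toList.mp hc, rfl⟩, ?_⟩
          exact (chi_sem j c c).mpr rfl
        · refine sem_all.mpr ?_
          rintro y hy
          obtain ⟨d, hd, rfl⟩ := succ_s.mp hy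
          refine sem_bigDisj.mpr ?_
          exact ⟨chi j d, List.mem_map.mpr ⟨d, Finset.mem_toList.mpr hd, rfl⟩,
            (chi_sem j d d).mpr rfl⟩

/-- part 1 of the theorem, as a standalone lemma. -/
lemma part1 (C : Concept ℕ (Fin 3)) :
    entails Oempty C13 (Concept.impl (Concept.ex 0 C) (Concept.all 0 C)) := by
  classical
  intro I _ x hx
  rw [sem_impl, sem_ex]
  rintro ⟨y, hy, hyC⟩
  rw [sem_all]
  intro z hz
  by_contra hzC
  have hyz : y ≠ z := fun h => hzC (h ▸ hyC)
  apply hx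
  refine ⟨{y, z}, ?_, ?_⟩
  · rw [Finset.card_insert_of_notMem (by simp [hyz]), Finset.card_singleton]
  · intro e he
    rcases Finset.mem_insert.mp he with rfl | he
    · exact ⟨hy, Set.mem_univ _⟩
    · obtain rfl := Finset.mem_singleton.mp he
      exact ⟨hz, Set.mem_univ _⟩

lemma C13_at_singleton {m : ℕ} (t : Ty m) :
    (Sum.inr {t} : (Jm m).Dom) ∈ C13.sem (Jm m) := by
  rintro ⟨s, hs, h⟩
  have hsub : s ⊆ {Sum.inl ⟨m, t⟩} := by
    intro e he
    obtain ⟨t', ht', rfl⟩ := succ_r.mp (h e he).1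
    obtain rfl := Finset.mem_singleton.mp ht'
    exact Finset.mem_singleton_self _
  have := Finset.card_le_card hsub
  replace this := this.trans_eq (Finset.card_singleton _)
  omega

/-- Theorem 4: ⊨ C₀ ⊑ (∃r.C → ∀r.C) for every ALC(Σ) concept C, and every
(Σ,n)-uniform ALC interpolant of C₀ has size at least Tower(n−2) for n ≥ 2. -/
theorem alcq_uniform_interpolant_lower_bound :
    (∀ C : Concept ℕ (Fin 3), C.isALC → C.inSig σ13 →
      entails Oempty C13 (Concept.impl (Concept.ex 0 C) (Concept.all 0 C))) ∧
    (∀ n : ℕ, 2 ≤ n → ∀ U : Concept ℕ (Fin 3),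
      UniformInterpolant Oempty σ13 C13 n U → Tower (n - 2) ≤ U.size) := by
  constructor
  · intro C _ _
    exact part1 C
  · intro n hn U hU
    obtain ⟨hALC, hSig, hEnt, hUni⟩ := hU
    set m : ℕ := n - 1 with hm
    -- U holds at every singleton root
    have hroot1 : ∀ t : Ty m, (Sum.inr {t} : (Jm m).Dom) ∈ U.sem (Jm m) :=
      fun t => hEnt (Jm m) (isModel_Oempty _) (C13_at_singleton t)
    -- U fails at every doubleton root with distinct types
    have hroot2 : ∀ t t' : Ty m, t ≠ t' →
        (Sum.inr {t, t'} : (Jm m).Dom) ∉ U.sem (Jm m) := by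
      intro t t' hne hmem
      have hEdepth : (Concept.impl (Concept.ex 0 (chi m t))
          (Concept.all 0 (chi m t))).roleDepth ≤ n := by
        have h1 : (Concept.ex 0 (chi m t)).roleDepth = (chi m t).roleDepth + 1 := rfl
        have h2 : (Concept.all 0 (chi m t)).roleDepth = (chi m t).roleDepth + 1 := rfl
        have h3 : (Concept.impl (Concept.ex 0 (chi m t))
            (Concept.all 0 (chi m t))).roleDepth =
            max (Concept.ex 0 (chi m t)).roleDepth (Concept.all 0 (chi m t)).roleDepth := rfl
        rw [h3, h1, h2, max_self]
        have := chi_roleDepth m t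
        omega
      have hEalc : (Concept.impl (Concept.ex 0 (chi m t))
          (Concept.all 0 (chi m t))).isALC := by
        have h := chi_isALC m t
        exact ⟨⟨rfl, h⟩, ⟨rfl, h⟩⟩
      have hEsig : (Concept.impl (Concept.ex 0 (chi m t))
          (Concept.all 0 (chi m t))).inSig σ13 := by
        have h := chi_inSig m t
        exact ⟨⟨mem_rs13 0, h⟩, ⟨mem_rs13 0, h⟩⟩
      have hUE := hUni _ hEalc hEsig hEdepth (part1 (chi m t)) (Jm m)
        (isModel_Oempty _) hmem
      replace hUE := fun h => (sem_impl.mp hUE) (sem_ex.mpr h)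
      have h1 : ∃ y, ((Sum.inr {t, t'} : (Jm m).Dom), y) ∈ (Jm m).roleI 0 ∧
          y ∈ (chi m t).sem (Jm m) :=
        ⟨Sum.inl ⟨m, t⟩, succ_r.mpr ⟨t, by simp, rfl⟩, (chi_sem m t t).mpr rfl⟩
      have h2 := hUE h1
      replace h2 := sem_all.mp h2
      have h3 := h2 (Sum.inl ⟨m, t'⟩) (succ_r.mpr ⟨t', by simp, rfl⟩)
      have : t' = t := (chi_sem m t t').mp h3
      exact hne this.symm
    -- the injection from types into valuations of topModal U
    classical
    let g : Ty m → ({M // M ∈ topModal U} → Prop) := fun t M =>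
      (Sum.inr {t} : (Jm m).Dom) ∈ (M : Concept ℕ (Fin 3)).sem (Jm m)
    have hg : Function.Injective g := by
      intro t t' hgt
      by_contra hne
      have hagree : ∀ M ∈ topModal U,
          ((Sum.inr {t, t'} : (Jm m).Dom) ∈ M.sem (Jm m) ↔
            (Sum.inr {t} : (Jm m).Dom) ∈ M.sem (Jm m)) := by
        intro M hM
        obtain ⟨ρ, D, rfl⟩ := mem_topModal_alc hALC hM
        by_cases hρ : ρ = 0
        · subst hρ
          have hval : ∀ S : Finset (Ty m),
              ((Sum.inr S : (Jm m).Dom) ∈ (Concept.atLeast 1 0 D).sem (Jm m) ↔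
                ∃ u ∈ S, (Sum.inl ⟨m, u⟩ : (Jm m).Dom) ∈ D.sem (Jm m)) := by
            intro S
            refine sem_atLeast1.trans ?_
            constructor
            · rintro ⟨y, hy, hyD⟩
              obtain ⟨u, hu, rfl⟩ := succ_r.mp hy
              exact ⟨u, hu, hyD⟩
            · rintro ⟨u, hu, hD⟩
              exact ⟨Sum.inl ⟨m, u⟩, succ_r.mpr ⟨u, hu, rfl⟩, hD⟩
          have hEqProp : ((Sum.inr {t'} : (Jm m).Dom) ∈ (Concept.atLeast 1 0 D).sem (Jm m)
              ↔ (Sum.inr {t} : (Jm m).Dom) ∈ (Concept.atLeast 1 0 D).sem (Jm m)) := by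
            have := congrFun hgt ⟨_, hM⟩
            exact iff_of_eq this.symm
          rw [hval, hval] at hEqProp
          rw [hval, hval]
          simp only [Finset.mem_insert, Finset.mem_singleton] at *
          constructor
          · rintro ⟨u, hu | hu, hD⟩
            · exact ⟨u, hu, hD⟩
            · subst hu
              obtain ⟨v, hv, hvD⟩ := hEqProp.mp ⟨u, rfl, hD⟩
              subst hv
              exact ⟨v, rfl, hvD⟩
          · rintro ⟨u, hu, hD⟩
            exact ⟨u, Or.inl hu, hD⟩
        · have hno : ∀ S : Finset (Ty m),
              (Sum.inr S : (Jm m).Dom) ∉ (Concept.atLeast 1 ρ D).sem (Jm m) := by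
            intro S hS
            replace hS := sem_atLeast1.mp hS
            obtain ⟨y, hy, _⟩ := hS
            exact no_succ_s_root hρ hy
          simp [hno]
      have hcontra := (sem_congr_topModal hSig hagree).mpr (hroot1 t)
      exact hroot2 t t' hne hcontra
    -- counting
    have hcard : Fintype.card (Ty m) ≤
        Fintype.card ({M // M ∈ topModal U} → Prop) :=
      Fintype.card_le_of_injective g hg
    rw [Fintype.card_fun, Fintype.card_prop, Fintype.card_coe, card_Ty] at hcard
    have hm1 : m - 1 + 1 = m := by omega
    have hTower : Tower m = 2 ^ Tower (m - 1) := by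
      conv_lhs => rw [← hm1]
      rfl
    rw [hTower] at hcard
    have hk : Tower (m - 1) ≤ (topModal U).card :=
      (Nat.pow_le_pow_iff_right (by omega)).mp hcard
    have hn2 : n - 2 = m - 1 := by omega
    rw [hn2]
    exact le_trans hk (card_topModal U)
end DL
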